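/- Fix p0 = 1/10, κ with 0 < κ ≤ 2p0, ε_v = κ/(40 p0), and the grid Γ = {p0, p0+κ, p0+2κ, …, 3p0}. Let Γ' ⊆ Γ with |Γ'| ≥ 2, let C ≥ 1, and let P' be a probability distribution on Γ' with P'(μ) ≥ 1/(C·|Γ'|) for every μ ∈ Γ'. Then, in the two-state three-action instance with designer utility u(c,ω)=1 and u(a,ω)=u(b,ω)=0, for every finite signal set S and every signaling scheme π: {0,1} → Δ(S), Σ_{μ∈Γ'} P'(μ)·(2μ/(1−2ε_v) − U(μ, π)) ≥ 2p0/(3(1−2ε_v)C). -/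

import Mathlib

set_option maxHeartbeats 1000000


open Finset

open Classical in
/-- The designer's expected utility in the two-state three-action instance:
the receiver takes the designer-preferred action `c` exactly when the posterior
probability of state 1 lies in `[1/2 − εv, 1/2 + εv]` (ties broken in favor of `c`),
and the designer gets utility 1 from `c` and 0 otherwise. Here `π ω t = π(t|ω)`. -/
noncomputable def designerPay {S : Type*} [Fintype S] (εv μ : ℝ)
    (π : Fin 2 → S → ℝ) : ℝ :=
  ∑ t, if 1 / 2 - εv ≤ μ * π 1 t / (μ * π 1 t + (1 - μ) * π 0 t) ∧
          μ * π 1 t / (μ * π 1 t + (1 - μ) * π 0 t) ≤ 1 / 2 + εv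
        then μ * π 1 t + (1 - μ) * π 0 t else 0

open Classical in
/-- Mass (under state 1) of signals whose posterior lies in the `c`-window. -/
noncomputable def goodMass {S : Type*} [Fintype S] (εv μ : ℝ)
    (π : Fin 2 → S → ℝ) : ℝ :=
  ∑ t, if 1 / 2 - εv ≤ μ * π 1 t / (μ * π 1 t + (1 - μ) * π 0 t) ∧
          μ * π 1 t / (μ * π 1 t + (1 - μ) * π 0 t) ≤ 1 / 2 + εv
        then π 1 t else 0

/-- Lemma 7, single-period regret under a roughly uniform belief:
with `p0 = 1/10`, grid spacing `κ ∈ (0, 2p0]`, `εv = κ/(40p0)`, and a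
`C`-roughly-uniform distribution `P'` over a subset `Γ' ⊆ Γ = {p0, p0+κ, …, 3p0}` of
at least two grid points, every signaling scheme incurs expected single-period regret
at least `2p0/(3(1−2εv)C)`. -/
theorem regret_roughly_uniform_belief
    {S : Type*} [Fintype S]
    (p0 κ εv C : ℝ) (Γ' : Finset ℝ) (P : ℝ → ℝ) (π : Fin 2 → S → ℝ)
    (hp0 : p0 = 1 / 10)
    (hκ0 : 0 < κ) (hκ : κ ≤ 2 * p0)
    (hεv : εv = κ / (40 * p0))
    (hC : 1 ≤ C)
    (hgrid : ∀ μ ∈ Γ', ∃ i : ℕ, μ = p0 + i * κ ∧ μ ≤ 3 * p0)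
    (hcard : 2 ≤ Γ'.card)
    (hP0 : ∀ μ ∈ Γ', 0 ≤ P μ) (hP1 : ∑ μ ∈ Γ', P μ = 1)
    (hPlb : ∀ μ ∈ Γ', 1 / (C * (Γ'.card : ℝ)) ≤ P μ)
    (hπ0 : ∀ ω t, 0 ≤ π ω t) (hπ1 : ∀ ω, ∑ t, π ω t = 1) :
    2 * p0 / (3 * (1 - 2 * εv) * C) ≤
      ∑ μ ∈ Γ', P μ * (2 * μ / (1 - 2 * εv) - designerPay εv μ π) := by
  classical
  have he : εv = κ / 4 := by rw [hεv, hp0]; ring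
  have he0 : 0 < εv := by rw [he]; linarith
  have he1 : εv ≤ 1 / 20 := by rw [he]; rw [hp0] at hκ; linarith
  have hL : 0 < 1 - 2 * εv := by linarith
  have hC0 : 0 < C := by linarith
  set N : ℝ := (Γ'.card : ℝ) with hN
  have hN2 : (2 : ℝ) ≤ N := by rw [hN]; exact_mod_cast hcard
  have hN0 : (0 : ℝ) < N := by linarith
  -- bounds on grid points
  have hbdd : ∀ μ ∈ Γ', p0 ≤ μ ∧ μ ≤ 3 * p0 := by
    intro μ hμ
    obtain ⟨i, hi, h3⟩ := hgrid μ hμ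
    refine ⟨?_, h3⟩
    have h0 : (0:ℝ) ≤ (i:ℝ) * κ := mul_nonneg (Nat.cast_nonneg i) hκ0.le
    rw [hi]; linarith
  -- grid spacing
  have hspace : ∀ μ ∈ Γ', ∀ μ' ∈ Γ', μ < μ' → μ + κ ≤ μ' := by
    intro μ hμ μ' hμ' hlt
    obtain ⟨i, hi, _⟩ := hgrid μ hμ
    obtain ⟨j, hj, _⟩ := hgrid μ' hμ'
    have hij : (i:ℝ) * κ < (j:ℝ) * κ := by rw [hi, hj] at hlt; linarith
    have : (i:ℝ) < (j:ℝ) := lt_of_mul_lt_mul_right hij hκ0.le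
    have hij' : i < j := by exact_mod_cast this
    have : (i:ℝ) + 1 ≤ (j:ℝ) := by exact_mod_cast hij'
    have : ((i:ℝ) + 1) * κ ≤ (j:ℝ) * κ := mul_le_mul_of_nonneg_right this hκ0.le
    rw [hi, hj]; linarith
  -- the posterior-in-window condition
  have hfacts : ∀ μ ∈ Γ', ∀ t : S,
      (1 / 2 - εv ≤ μ * π 1 t / (μ * π 1 t + (1 - μ) * π 0 t) ∧
        μ * π 1 t / (μ * π 1 t + (1 - μ) * π 0 t) ≤ 1 / 2 + εv) →
      0 < π 1 t ∧ 0 < π 0 t ∧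
        (1 / 2 - εv) * ((1 - μ) * π 0 t) ≤ (1 / 2 + εv) * (μ * π 1 t) ∧
        (1 / 2 - εv) * (μ * π 1 t) ≤ (1 / 2 + εv) * ((1 - μ) * π 0 t) := by
    intro μ hμ t hct
    obtain ⟨hμl, hμu⟩ := hbdd μ hμ
    have hμ0 : 0 < μ := by rw [hp0] at hμl; linarith
    have hμ1 : μ < 1 := by rw [hp0] at hμu; linarith
    obtain ⟨h1, h2⟩ := hct
    set x := π 1 t with hx
    set y := π 0 t with hy
    have hx0 : 0 ≤ x := hπ0 1 t
    have hy0 : 0 ≤ y := hπ0 0 t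
    have hD0 : 0 ≤ μ * x + (1 - μ) * y := by
      have := mul_nonneg hμ0.le hx0
      have := mul_nonneg (by linarith : (0:ℝ) ≤ 1 - μ) hy0
      linarith
    have hDpos : 0 < μ * x + (1 - μ) * y := by
      rcases hD0.lt_or_eq with h | h
      · exact h
      · exfalso
        rw [← h, div_zero] at h1
        linarith
    have hA : (1 / 2 - εv) * (μ * x + (1 - μ) * y) ≤ μ * x :=
      (le_div_iff₀ hDpos).mp h1
    have hB : μ * x ≤ (1 / 2 + εv) * (μ * x + (1 - μ) * y) :=
      (div_le_iff₀ hDpos).mp h2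
    have hA' : (1 / 2 - εv) * ((1 - μ) * y) ≤ (1 / 2 + εv) * (μ * x) := by nlinarith
    have hB' : (1 / 2 - εv) * (μ * x) ≤ (1 / 2 + εv) * ((1 - μ) * y) := by nlinarith
    have hab : (0:ℝ) < (1 / 2 - εv) * (1 - μ) :=
      mul_pos (by linarith) (by linarith)
    have hcm : (0:ℝ) < (1 / 2 - εv) * μ := mul_pos (by linarith) hμ0
    have hxpos : 0 < x := by
      rcases hx0.lt_or_eq with h | h
      · exact h
      · exfalso
        have hx' : x = 0 := h.symm
        rw [hx'] at hA'
        have hyz : (1 / 2 - εv) * ((1 - μ) * y) ≤ 0 := by linarith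
        have hy' : y ≤ 0 := by nlinarith [hab]
        have hy'' : y = 0 := le_antisymm hy' hy0
        rw [hx', hy''] at hDpos
        linarith
    have hypos : 0 < y := by
      rcases hy0.lt_or_eq with h | h
      · exact h
      · exfalso
        have hy' : y = 0 := h.symm
        rw [hy'] at hB'
        have hxz : (1 / 2 - εv) * (μ * x) ≤ 0 := by linarith
        have hx' : x ≤ 0 := by nlinarith [hcm]
        have hx'' : x = 0 := le_antisymm hx' hx0
        rw [hx'', hy'] at hDpos
        linarith
    exact ⟨hxpos, hypos, hA', hB'⟩
  -- at most one grid prior can see a given signal in the window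
  have huniq : ∀ t : S, ∀ μ ∈ Γ', ∀ μ' ∈ Γ',
      (1 / 2 - εv ≤ μ * π 1 t / (μ * π 1 t + (1 - μ) * π 0 t) ∧
        μ * π 1 t / (μ * π 1 t + (1 - μ) * π 0 t) ≤ 1 / 2 + εv) →
      (1 / 2 - εv ≤ μ' * π 1 t / (μ' * π 1 t + (1 - μ') * π 0 t) ∧
        μ' * π 1 t / (μ' * π 1 t + (1 - μ') * π 0 t) ≤ 1 / 2 + εv) →
      ¬ (μ < μ') := by
    intro t μ hμ μ' hμ' hc hc' hlt
    obtain ⟨hx, hy, hA, _⟩ := hfacts μ hμ t hc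
    obtain ⟨_, _, _, hB⟩ := hfacts μ' hμ' t hc'
    set x := π 1 t
    set y := π 0 t
    have hxy : 0 < x * y := mul_pos hx hy
    obtain ⟨hμl, hμu⟩ := hbdd μ hμ
    obtain ⟨hμ'l, hμ'u⟩ := hbdd μ' hμ'
    rw [hp0] at hμl hμu hμ'l hμ'u
    have hd : μ + κ ≤ μ' := hspace μ hμ μ' hμ' hlt
    have hd4 : μ + 4 * εv ≤ μ' := by rw [he]; linarith
    -- multiply the two window inequalities
    have hPQ : ((1 / 2 - εv) * ((1 - μ) * y)) * ((1 / 2 - εv) * (μ' * x)) ≤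
        ((1 / 2 + εv) * (μ * x)) * ((1 / 2 + εv) * ((1 - μ') * y)) :=
      mul_le_mul hA hB
        (mul_nonneg (by linarith) (mul_nonneg (by linarith) hx.le))
        (mul_nonneg (by linarith) (mul_nonneg (by linarith) hx.le))
    have h2 : ((1 / 2 - εv) ^ 2 * ((1 - μ) * μ')) * (x * y) ≤
        ((1 / 2 + εv) ^ 2 * (μ * (1 - μ'))) * (x * y) := by
      calc ((1 / 2 - εv) ^ 2 * ((1 - μ) * μ')) * (x * y)
          = ((1 / 2 - εv) * ((1 - μ) * y)) * ((1 / 2 - εv) * (μ' * x)) := by ring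
        _ ≤ ((1 / 2 + εv) * (μ * x)) * ((1 / 2 + εv) * ((1 - μ') * y)) := hPQ
        _ = ((1 / 2 + εv) ^ 2 * (μ * (1 - μ'))) * (x * y) := by ring
    have hscal : (1 / 2 - εv) ^ 2 * ((1 - μ) * μ') ≤ (1 / 2 + εv) ^ 2 * (μ * (1 - μ')) :=
      le_of_mul_le_mul_right h2 hxy
    nlinarith [mul_nonneg he0.le (by linarith : (0:ℝ) ≤ μ' - μ - 4 * εv),
      mul_nonneg (mul_nonneg he0.le (by linarith : (0:ℝ) ≤ μ)) (by linarith : (0:ℝ) ≤ μ'),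
      mul_nonneg he0.le (by linarith : (0:ℝ) ≤ 3 / 10 - μ),
      mul_nonneg he0.le (by linarith : (0:ℝ) ≤ 3 / 10 - μ'),
      mul_nonneg (mul_nonneg he0.le he0.le) (by linarith : (0:ℝ) ≤ μ' - μ)]
  -- basic properties of goodMass
  have hq0' : ∀ μ : ℝ, 0 ≤ goodMass εv μ π := by
    intro μ
    apply Finset.sum_nonneg
    intro t _
    split_ifs with h
    · exact hπ0 1 t
    · exact le_refl 0
  have hqle1 : ∀ μ : ℝ, goodMass εv μ π ≤ 1 := by
    intro μ
    rw [goodMass]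
    refine le_trans (Finset.sum_le_sum ?_) (le_of_eq (hπ1 1))
    intro t _
    split_ifs with h
    · exact le_refl _
    · exact hπ0 1 t
  -- payoff bound via goodMass
  have hpay : ∀ μ ∈ Γ', designerPay εv μ π ≤ 2 * μ / (1 - 2 * εv) * goodMass εv μ π := by
    intro μ hμ
    rw [designerPay, goodMass, Finset.mul_sum]
    apply Finset.sum_le_sum
    intro t _
    by_cases hct : 1 / 2 - εv ≤ μ * π 1 t / (μ * π 1 t + (1 - μ) * π 0 t) ∧
        μ * π 1 t / (μ * π 1 t + (1 - μ) * π 0 t) ≤ 1 / 2 + εv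
    · rw [if_pos hct, if_pos hct]
      obtain ⟨_, _, hA', _⟩ := hfacts μ hμ t hct
      rw [div_mul_eq_mul_div, le_div_iff₀ hL]
      nlinarith [hA']
    · rw [if_neg hct, if_neg hct, mul_zero]
  -- sum of goodMass over the grid is at most 1
  have hqsum : ∑ μ ∈ Γ', goodMass εv μ π ≤ 1 := by
    have h1 : ∑ μ ∈ Γ', goodMass εv μ π = ∑ t, ∑ μ ∈ Γ',
        (if 1 / 2 - εv ≤ μ * π 1 t / (μ * π 1 t + (1 - μ) * π 0 t) ∧
            μ * π 1 t / (μ * π 1 t + (1 - μ) * π 0 t) ≤ 1 / 2 + εv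
          then π 1 t else 0) := by
      rw [Finset.sum_comm]
      rfl
    rw [h1]
    refine le_trans (Finset.sum_le_sum ?_) (le_of_eq (hπ1 1))
    intro t _
    by_cases hex : ∃ μ0 ∈ Γ', 1 / 2 - εv ≤ μ0 * π 1 t / (μ0 * π 1 t + (1 - μ0) * π 0 t) ∧
        μ0 * π 1 t / (μ0 * π 1 t + (1 - μ0) * π 0 t) ≤ 1 / 2 + εv
    · obtain ⟨μ0, hμ0m, hc0⟩ := hex
      have heq : ∑ μ ∈ Γ',
          (if 1 / 2 - εv ≤ μ * π 1 t / (μ * π 1 t + (1 - μ) * π 0 t) ∧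
              μ * π 1 t / (μ * π 1 t + (1 - μ) * π 0 t) ≤ 1 / 2 + εv
            then π 1 t else 0) =
          (if 1 / 2 - εv ≤ μ0 * π 1 t / (μ0 * π 1 t + (1 - μ0) * π 0 t) ∧
              μ0 * π 1 t / (μ0 * π 1 t + (1 - μ0) * π 0 t) ≤ 1 / 2 + εv
            then π 1 t else 0) := by
        apply Finset.sum_eq_single μ0
        · intro b hb hbne
          rw [if_neg]
          intro hcb
          rcases lt_or_gt_of_ne hbne with h | h
          · exact huniq t b hb μ0 hμ0m hcb hc0 h
          · exact huniq t μ0 hμ0m b hb hc0 hcb h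
        · intro habs
          exact absurd hμ0m habs
      rw [heq, if_pos hc0]
    · have heq : ∑ μ ∈ Γ',
          (if 1 / 2 - εv ≤ μ * π 1 t / (μ * π 1 t + (1 - μ) * π 0 t) ∧
              μ * π 1 t / (μ * π 1 t + (1 - μ) * π 0 t) ≤ 1 / 2 + εv
            then π 1 t else 0) = 0 := by
        apply Finset.sum_eq_zero
        intro μ hμ
        rw [if_neg]
        intro hcb
        exact hex ⟨μ, hμ, hcb⟩
      rw [heq]
      exact hπ0 1 t
  -- termwise regret bound
  have hterm : ∀ μ ∈ Γ',
      1 / (C * N) * (2 * p0 / (1 - 2 * εv) * (1 - goodMass εv μ π)) ≤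
        P μ * (2 * μ / (1 - 2 * εv) - designerPay εv μ π) := by
    intro μ hμ
    obtain ⟨hμl, hμu⟩ := hbdd μ hμ
    have hq1 : goodMass εv μ π ≤ 1 := hqle1 μ
    have hq0 : 0 ≤ goodMass εv μ π := hq0' μ
    have hp : designerPay εv μ π ≤ 2 * μ / (1 - 2 * εv) * goodMass εv μ π := hpay μ hμ
    have hba : 2 * p0 / (1 - 2 * εv) ≤ 2 * μ / (1 - 2 * εv) := by
      rw [div_le_div_iff₀ hL hL]
      nlinarith [mul_nonneg (by linarith : (0:ℝ) ≤ 2 * μ - 2 * p0) hL.le]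
    have hb0 : 0 ≤ 2 * p0 / (1 - 2 * εv) := by
      apply div_nonneg ?_ hL.le
      rw [hp0]; norm_num
    have hgap : 2 * p0 / (1 - 2 * εv) * (1 - goodMass εv μ π) ≤
        2 * μ / (1 - 2 * εv) - designerPay εv μ π := by
      nlinarith [mul_nonneg (sub_nonneg.mpr hba) (by linarith : (0:ℝ) ≤ 1 - goodMass εv μ π), hp]
    have hF0 : 0 ≤ 2 * p0 / (1 - 2 * εv) * (1 - goodMass εv μ π) :=
      mul_nonneg hb0 (by linarith)
    calc 1 / (C * N) * (2 * p0 / (1 - 2 * εv) * (1 - goodMass εv μ π))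
        ≤ P μ * (2 * p0 / (1 - 2 * εv) * (1 - goodMass εv μ π)) :=
          mul_le_mul_of_nonneg_right (hPlb μ hμ) hF0
      _ ≤ P μ * (2 * μ / (1 - 2 * εv) - designerPay εv μ π) :=
          mul_le_mul_of_nonneg_left hgap (hP0 μ hμ)
  -- final aggregation
  have hsum1 : ∑ μ ∈ Γ', (1 - goodMass εv μ π) = N - ∑ μ ∈ Γ', goodMass εv μ π := by
    rw [Finset.sum_sub_distrib, Finset.sum_const, nsmul_eq_mul, mul_one]
  have key : 2 * p0 / (3 * (1 - 2 * εv) * C) ≤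
      ∑ μ ∈ Γ', 1 / (C * N) * (2 * p0 / (1 - 2 * εv) * (1 - goodMass εv μ π)) := by
    have hrw : ∑ μ ∈ Γ', 1 / (C * N) * (2 * p0 / (1 - 2 * εv) * (1 - goodMass εv μ π))
        = 1 / (C * N) * (2 * p0 / (1 - 2 * εv)) *
            (N - ∑ μ ∈ Γ', goodMass εv μ π) := by
      rw [← Finset.mul_sum, ← Finset.mul_sum, hsum1, mul_assoc]
    rw [hrw]
    set QQ := ∑ μ ∈ Γ', goodMass εv μ π with hQQ
    have hQ1 : QQ ≤ 1 := hqsum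
    have hXeq : 1 / (C * N) * (2 * p0 / (1 - 2 * εv)) * (N - QQ)
        = 2 * p0 * (N - QQ) / ((1 - 2 * εv) * (C * N)) := by
      field_simp
    rw [hXeq]
    have hpos1 : (0:ℝ) < 3 * (1 - 2 * εv) * C := by nlinarith [mul_pos hL hC0]
    have hpos2 : (0:ℝ) < (1 - 2 * εv) * (C * N) := by positivity
    rw [div_le_div_iff₀ hpos1 hpos2]
    nlinarith [mul_nonneg (mul_pos hL hC0).le (by linarith : (0:ℝ) ≤ 3 * (N - QQ) - N), hp0]
  calc 2 * p0 / (3 * (1 - 2 * εv) * C)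
      ≤ ∑ μ ∈ Γ', 1 / (C * N) * (2 * p0 / (1 - 2 * εv) * (1 - goodMass εv μ π)) := key
    _ ≤ ∑ μ ∈ Γ', P μ * (2 * μ / (1 - 2 * εv) - designerPay εv μ π) :=
        Finset.sum_le_sum hterm
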